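/- arXiv:1906.00991 — 2 statements merged into one kernel-verified Lean document; each statement's English description precedes it below -/
import Mathlib

section
/- Let 0 < β < α < 1 with α² + β² = 1. The singlet-assemblage fraction of the initial assemblage Σ^(α) equals F_Φ(Σ^(α)) = (α + β)/√2 = √(1 − ½(α − β)²). -/
open Matrix Finset
open scoped ComplexOrder

/-- Positive-semidefinite square root of a matrix (defined as `0` if the matrix
is not positive semidefinite). -/
noncomputable def matSqrt {d : ℕ} (A : Matrix (Fin d) (Fin d) ℂ) :
    Matrix (Fin d) (Fin d) ℂ :=
  open Classical in
  if h : A.PosSemidef then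
    (h.1.eigenvectorUnitary : Matrix (Fin d) (Fin d) ℂ) *
      diagonal ((↑) ∘ (Real.sqrt ·) ∘ h.1.eigenvalues) *
      (star h.1.eigenvectorUnitary : Matrix (Fin d) (Fin d) ℂ)
  else 0

/-- Fidelity between positive semidefinite matrices: `F(A,B) = Tr[√(√A · B · √A)]`. -/
noncomputable def mFid {d : ℕ} (A B : Matrix (Fin d) (Fin d) ℂ) : ℝ :=
  (matSqrt (matSqrt A * B * matSqrt A)).trace.re

/-- The standard basis vector `|0⟩` of `ℂ²`. -/
def e0 : Fin 2 → ℂ := ![1, 0]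

/-- The standard basis vector `|1⟩` of `ℂ²`. -/
def e1 : Fin 2 → ℂ := ![0, 1]

/-- The projector `|0⟩⟨0|`. -/
def P00 : Matrix (Fin 2) (Fin 2) ℂ := vecMulVec e0 (star e0)

/-- The projector `|1⟩⟨1|`. -/
def P11 : Matrix (Fin 2) (Fin 2) ℂ := vecMulVec e1 (star e1)

/-- The Kraus operator `K⁰ = (β/α)|0⟩⟨0| + |1⟩⟨1|` of the successful filter outcome. -/
noncomputable def K0 (α β : ℝ) : Matrix (Fin 2) (Fin 2) ℂ :=
  ((β / α : ℝ) : ℂ) • P00 + P11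

/-- The Kraus operator `K¹ = (√(α²−β²)/α)|0⟩⟨0|` of the failed filter outcome. -/
noncomputable def K1 (α β : ℝ) : Matrix (Fin 2) (Fin 2) ℂ :=
  ((Real.sqrt (α ^ 2 - β ^ 2) / α : ℝ) : ℂ) • P00

/-- Bob's reduced state `ρ_B = α²|0⟩⟨0| + β²|1⟩⟨1|` of the assemblage `Σ^(α)`. -/
noncomputable def ρB (α β : ℝ) : Matrix (Fin 2) (Fin 2) ℂ :=
  ((α ^ 2 : ℝ) : ℂ) • P00 + ((β ^ 2 : ℝ) : ℂ) • P11

/-- The vector `|α₊⟩ = α|0⟩ + β|1⟩`. -/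
def ketαp (α β : ℝ) : Fin 2 → ℂ := ![(α : ℂ), (β : ℂ)]

/-- The vector `|α₋⟩ = α|0⟩ − β|1⟩`. -/
def ketαm (α β : ℝ) : Fin 2 → ℂ := ![(α : ℂ), -(β : ℂ)]

/-- The vector `|+⟩ = (|0⟩+|1⟩)/√2`. -/
noncomputable def ketp : Fin 2 → ℂ :=
  ![(1 / Real.sqrt 2 : ℝ), (1 / Real.sqrt 2 : ℝ)]

/-- The vector `|−⟩ = (|0⟩−|1⟩)/√2`. -/
noncomputable def ketm : Fin 2 → ℂ :=
  ![(1 / Real.sqrt 2 : ℝ), (-(1 / Real.sqrt 2) : ℝ)]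

/-- The assemblage `Σ^(α)` with components `σ^(α)_{a|x}` (first index `a`, second `x`):
`σ^(α)_{0|0} = α²|0⟩⟨0|`, `σ^(α)_{1|0} = β²|1⟩⟨1|`,
`σ^(α)_{0|1} = ½|α₊⟩⟨α₊|`, `σ^(α)_{1|1} = ½|α₋⟩⟨α₋|`. -/
noncomputable def σα (α β : ℝ) (a x : Fin 2) : Matrix (Fin 2) (Fin 2) ℂ :=
  if x = 0 then
    if a = 0 then ((α ^ 2 : ℝ) : ℂ) • P00 else ((β ^ 2 : ℝ) : ℂ) • P11
  else
    if a = 0 then (1 / 2 : ℂ) • vecMulVec (ketαp α β) (star (ketαp α β))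
    else (1 / 2 : ℂ) • vecMulVec (ketαm α β) (star (ketαm α β))

/-- The singlet assemblage `Σ^{Φ⁺}` with components
`σ^{Φ⁺}_{0|0} = ½|0⟩⟨0|`, `σ^{Φ⁺}_{1|0} = ½|1⟩⟨1|`,
`σ^{Φ⁺}_{0|1} = ½|+⟩⟨+|`, `σ^{Φ⁺}_{1|1} = ½|−⟩⟨−|`. -/
noncomputable def σΦ (a x : Fin 2) : Matrix (Fin 2) (Fin 2) ℂ :=
  if x = 0 then
    if a = 0 then (1 / 2 : ℂ) • P00 else (1 / 2 : ℂ) • P11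
  else
    if a = 0 then (1 / 2 : ℂ) • vecMulVec ketp (star ketp)
    else (1 / 2 : ℂ) • vecMulVec ketm (star ketm)

lemma matSqrt_of_sq {d : ℕ} {A B : Matrix (Fin d) (Fin d) ℂ} (hB : B.PosSemidef)
    (h : B ^ 2 = A) : matSqrt A = B := by
  have hA : A.PosSemidef := h ▸ hB.pow 2
  rw [matSqrt, dif_pos hA]
  open scoped MatrixOrder in
  have key : (hA.1.eigenvectorUnitary : Matrix (Fin d) (Fin d) ℂ) *
      diagonal ((↑) ∘ (Real.sqrt ·) ∘ hA.1.eigenvalues) *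
      (star hA.1.eigenvectorUnitary : Matrix (Fin d) (Fin d) ℂ) = CFC.sqrt A := by
    rw [CFC.sqrt_eq_cfc, cfc_nnreal_eq_real _ A, hA.1.cfc_eq]
    simp only [IsHermitian.cfc, Real.coe_sqrt, Real.coe_toNNReal', Unitary.conjStarAlgAut_apply]
    congr 3
    funext i
    simp [Function.comp_apply, max_eq_left (hA.eigenvalues_nonneg i)]
  open scoped MatrixOrder in
  rw [key, CFC.sqrt_eq_iff A B hA.nonneg hB.nonneg, ← sq, h]

lemma vmv_mul {n : ℕ} (a b c d : Fin n → ℂ) :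
    vecMulVec a b * vecMulVec c d = (b ⬝ᵥ c) • vecMulVec a d := by
  ext i j
  simp only [Matrix.mul_apply, vecMulVec_apply, Matrix.smul_apply, dotProduct, smul_eq_mul,
    Finset.sum_mul, Finset.mul_sum]
  exact Finset.sum_congr rfl fun k _ => by ring

lemma psd_smul_outer {n : ℕ} (r : ℝ) (hr : 0 ≤ r) (v : Fin n → ℂ) :
    ((r : ℂ) • vecMulVec v (star v)).PosSemidef := by
  rw [posSemidef_iff_dotProduct_mulVec]
  constructor
  · unfold Matrix.IsHermitian
    rw [conjTranspose_smul]
    congr 1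
    · simp
    · ext i j
      simp [conjTranspose_apply, vecMulVec_apply, mul_comm]
  · intro x
    have hmv : (vecMulVec v (star v)) *ᵥ x = (star v ⬝ᵥ x) • v := by
      ext i
      simp only [mulVec, dotProduct, vecMulVec_apply, Pi.smul_apply, smul_eq_mul,
        Finset.mul_sum]
      rw [Finset.sum_mul]
      exact Finset.sum_congr rfl fun k _ => by ring
    have hx : star x ⬝ᵥ (vecMulVec v (star v)) *ᵥ x
        = (Complex.normSq (star v ⬝ᵥ x) : ℂ) := by
      rw [hmv, dotProduct_smul]
      have h5 : star x ⬝ᵥ v = star (star v ⬝ᵥ x) := by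
        simp only [dotProduct, star_sum, star_mul', star_star, Pi.star_apply]
        exact Finset.sum_congr rfl fun k _ => by ring
      rw [smul_eq_mul, h5, Complex.star_def, Complex.mul_conj]
    rw [smul_mulVec, dotProduct_smul, hx]
    rw [smul_eq_mul, ← Complex.ofReal_mul]
    rw [Complex.zero_le_real]
    exact mul_nonneg hr (Complex.normSq_nonneg _)

lemma mFid_rank1 {n : ℕ} (v w : Fin n → ℂ) (hv : star v ⬝ᵥ v = 1) (hw : star w ⬝ᵥ w = 1)
    (p q : ℝ) (hp : 0 ≤ p) (hq : 0 ≤ q) :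
    mFid ((p : ℂ) • vecMulVec v (star v)) ((q : ℂ) • vecMulVec w (star w))
      = Real.sqrt (p * q) * ‖star v ⬝ᵥ w‖ := by
  set Mv := vecMulVec v (star v) with hMv
  set Mw := vecMulVec w (star w) with hMw
  have hMvMv : Mv * Mv = Mv := by
    rw [hMv, vmv_mul, hv, one_smul]
  have h1 : matSqrt ((p : ℂ) • Mv) = ((Real.sqrt p : ℝ) : ℂ) • Mv := by
    apply matSqrt_of_sq (psd_smul_outer _ (Real.sqrt_nonneg p) v)
    rw [smul_pow, show Mv ^ 2 = Mv from by rw [pow_two, hMvMv]]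
    congr 1
    rw [← Complex.ofReal_pow, Real.sq_sqrt hp]
  set c : ℂ := star v ⬝ᵥ w with hc
  have hwv : star w ⬝ᵥ v = star c := by
    simp only [hc, dotProduct, star_sum, star_mul', star_star, Pi.star_apply]
    exact Finset.sum_congr rfl fun k _ => by ring
  have h2 : Mv * Mw * Mv = ((Complex.normSq c : ℝ) : ℂ) • Mv := by
    rw [hMv, hMw, vmv_mul, ← hc, smul_mul_assoc, vmv_mul, hwv, smul_smul]
    congr 1
    rw [mul_comm, Complex.star_def, ← Complex.normSq_eq_conj_mul_self]
  have h3 : (((Real.sqrt p : ℝ) : ℂ) • Mv) * ((q : ℂ) • Mw) * (((Real.sqrt p : ℝ) : ℂ) • Mv)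
      = (((p * q * Complex.normSq c : ℝ)) : ℂ) • Mv := by
    have e1 : Mv * ((q : ℂ) • Mw) * Mv = (q : ℂ) • (Mv * Mw * Mv) := by
      rw [mul_smul_comm, smul_mul_assoc]
    rw [smul_mul_assoc, mul_smul_comm, smul_mul_assoc, e1, h2, smul_smul, smul_smul, smul_smul]
    congr 1
    have hr : Real.sqrt p * (Real.sqrt p * (q * Complex.normSq c))
        = p * q * Complex.normSq c := by
      rw [show Real.sqrt p * (Real.sqrt p * (q * Complex.normSq c))
          = (Real.sqrt p * Real.sqrt p) * (q * Complex.normSq c) by ring,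
        Real.mul_self_sqrt hp]
      ring
    rw [← hr]
    push_cast
    ring
  have h4 : matSqrt ((((p * q * Complex.normSq c : ℝ)) : ℂ) • Mv)
      = ((Real.sqrt (p * q * Complex.normSq c) : ℝ) : ℂ) • Mv := by
    apply matSqrt_of_sq (psd_smul_outer _ (Real.sqrt_nonneg _) v)
    rw [smul_pow, show Mv ^ 2 = Mv from by rw [pow_two, hMvMv]]
    congr 1
    rw [← Complex.ofReal_pow, Real.sq_sqrt
      (mul_nonneg (mul_nonneg hp hq) (Complex.normSq_nonneg _))]
  have htr : Mv.trace = 1 := by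
    rw [← hv]
    simp only [hMv, Matrix.trace, Matrix.diag, vecMulVec_apply, dotProduct, Pi.star_apply]
    exact Finset.sum_congr rfl fun k _ => by ring
  rw [mFid, h1, h3, h4, trace_smul, htr, smul_eq_mul, mul_one, Complex.ofReal_re,
    Real.sqrt_mul (by positivity), Complex.norm_def]

lemma dot_cast_abs (x y : ℝ) (h : 0 ≤ x + y) :
    ‖(x : ℂ) + (y : ℂ)‖ = x + y := by
  rw [← Complex.ofReal_add, Complex.norm_real, Real.norm_eq_abs, abs_of_nonneg h]

/-- The singlet-assemblage fraction of the initial assemblage `Σ^(α)`,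
`F_Φ(Σ^(α)) = min_{x∈{0,1}} Σ_a F(σ^(α)_{a|x}, σ^{Φ⁺}_{a|x})`, equals
`(α + β)/√2 = √(1 − ½(α − β)²)`. -/
theorem singlet_fraction_initial (α β : ℝ) (hβ : 0 < β) (hβα : β < α) (hα : α < 1)
    (hnorm : α ^ 2 + β ^ 2 = 1) :
    min (∑ a, mFid (σα α β a 0) (σΦ a 0)) (∑ a, mFid (σα α β a 1) (σΦ a 1)) =
        (α + β) / Real.sqrt 2 ∧
      (α + β) / Real.sqrt 2 = Real.sqrt (1 - 1 / 2 * (α - β) ^ 2) := by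
  have hα0 : (0:ℝ) < α := hβ.trans hβα
  have hs2 : (0:ℝ) < Real.sqrt 2 := Real.sqrt_pos.mpr (by norm_num)
  have hs2m : Real.sqrt 2 * Real.sqrt 2 = 2 := Real.mul_self_sqrt (by norm_num)
  have habv : (0:ℝ) ≤ α + β := by linarith
  have half : ((1:ℂ)/2) = (((1/2 : ℝ)) : ℂ) := by norm_num
  -- x = 0 terms
  have t00 : mFid (σα α β 0 0) (σΦ 0 0) = α / Real.sqrt 2 := by
    have ha : σα α β 0 0 = ((α^2 : ℝ) : ℂ) • vecMulVec e0 (star e0) := by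
      simp [σα, P00]
    have hb : σΦ 0 0 = (((1/2 : ℝ)) : ℂ) • vecMulVec e0 (star e0) := by
      norm_num [σΦ, P00]
    rw [ha, hb, mFid_rank1 e0 e0 (by simp [e0, dotProduct, Fin.sum_univ_two])
      (by simp [e0, dotProduct, Fin.sum_univ_two]) _ _ (by positivity) (by norm_num)]
    have : star e0 ⬝ᵥ e0 = 1 := by simp [e0, dotProduct, Fin.sum_univ_two]
    rw [this]
    simp only [_root_.map_one, norm_one, mul_one]
    rw [Real.sqrt_mul (sq_nonneg α), Real.sqrt_sq hα0.le,
      show (1/2 : ℝ) = 2⁻¹ by norm_num, Real.sqrt_inv, div_eq_mul_inv]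
  have t10 : mFid (σα α β 1 0) (σΦ 1 0) = β / Real.sqrt 2 := by
    have ha : σα α β 1 0 = ((β^2 : ℝ) : ℂ) • vecMulVec e1 (star e1) := by
      simp [σα, P11]
    have hb : σΦ 1 0 = (((1/2 : ℝ)) : ℂ) • vecMulVec e1 (star e1) := by
      norm_num [σΦ, P11]
    rw [ha, hb, mFid_rank1 e1 e1 (by simp [e1, dotProduct, Fin.sum_univ_two])
      (by simp [e1, dotProduct, Fin.sum_univ_two]) _ _ (by positivity) (by norm_num)]
    have : star e1 ⬝ᵥ e1 = 1 := by simp [e1, dotProduct, Fin.sum_univ_two]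
    rw [this]
    simp only [_root_.map_one, norm_one, mul_one]
    rw [Real.sqrt_mul (sq_nonneg β), Real.sqrt_sq hβ.le,
      show (1/2 : ℝ) = 2⁻¹ by norm_num, Real.sqrt_inv, div_eq_mul_inv]
  -- x = 1 terms
  have hvp : star (ketαp α β) ⬝ᵥ ketαp α β = 1 := by
    simp only [ketαp, dotProduct, Fin.sum_univ_two, Pi.star_apply]
    simp [Complex.star_def, Complex.conj_ofReal]
    norm_cast
    nlinarith [hnorm]
  have hvm : star (ketαm α β) ⬝ᵥ ketαm α β = 1 := by
    simp only [ketαm, dotProduct, Fin.sum_univ_two, Pi.star_apply]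
    simp [Complex.star_def, Complex.conj_ofReal]
    norm_cast
    nlinarith [hnorm]
  have hwp : star ketp ⬝ᵥ ketp = 1 := by
    simp only [ketp, dotProduct, Fin.sum_univ_two, Pi.star_apply]
    simp [Complex.star_def, Complex.conj_ofReal]
    rw [← mul_inv, show ((Real.sqrt 2 : ℝ) : ℂ) * ((Real.sqrt 2 : ℝ) : ℂ) = 2 by
      norm_cast]
    norm_num
  have hwm : star ketm ⬝ᵥ ketm = 1 := by
    simp only [ketm, dotProduct, Fin.sum_univ_two, Pi.star_apply]
    simp [Complex.star_def, Complex.conj_ofReal]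
    rw [← mul_inv, show ((Real.sqrt 2 : ℝ) : ℂ) * ((Real.sqrt 2 : ℝ) : ℂ) = 2 by
      norm_cast]
    norm_num
  have hcp : star (ketαp α β) ⬝ᵥ ketp = (((α + β) / Real.sqrt 2 : ℝ) : ℂ) := by
    simp only [ketαp, ketp, dotProduct, Fin.sum_univ_two, Pi.star_apply]
    simp [Complex.star_def, Complex.conj_ofReal]
    rw [div_eq_mul_inv]
    push_cast
    ring
  have hcm : star (ketαm α β) ⬝ᵥ ketm = (((α + β) / Real.sqrt 2 : ℝ) : ℂ) := by
    simp only [ketαm, ketm, dotProduct, Fin.sum_univ_two, Pi.star_apply]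
    simp [Complex.star_def, Complex.conj_ofReal]
    rw [div_eq_mul_inv]
    push_cast
    ring
  have habs : ‖(((α + β) / Real.sqrt 2 : ℝ) : ℂ)‖ = (α + β) / Real.sqrt 2 := by
    rw [Complex.norm_real, Real.norm_eq_abs, abs_of_nonneg (div_nonneg habv hs2.le)]
  have t01 : mFid (σα α β 0 1) (σΦ 0 1) = 1/2 * ((α + β) / Real.sqrt 2) := by
    have ha : σα α β 0 1 = (((1/2 : ℝ)) : ℂ) • vecMulVec (ketαp α β) (star (ketαp α β)) := by
      norm_num [σα]
    have hb : σΦ 0 1 = (((1/2 : ℝ)) : ℂ) • vecMulVec ketp (star ketp) := by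
      norm_num [σΦ]
    rw [ha, hb, mFid_rank1 _ _ hvp hwp _ _ (by norm_num) (by norm_num), hcp, habs]
    rw [show (1/2 : ℝ) * (1/2) = (1/2)^2 by ring, Real.sqrt_sq (by norm_num)]
  have t11 : mFid (σα α β 1 1) (σΦ 1 1) = 1/2 * ((α + β) / Real.sqrt 2) := by
    have ha : σα α β 1 1 = (((1/2 : ℝ)) : ℂ) • vecMulVec (ketαm α β) (star (ketαm α β)) := by
      norm_num [σα]
    have hb : σΦ 1 1 = (((1/2 : ℝ)) : ℂ) • vecMulVec ketm (star ketm) := by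
      norm_num [σΦ]
    rw [ha, hb, mFid_rank1 _ _ hvm hwm _ _ (by norm_num) (by norm_num), hcm, habs]
    rw [show (1/2 : ℝ) * (1/2) = (1/2)^2 by ring, Real.sqrt_sq (by norm_num)]
  constructor
  · rw [Fin.sum_univ_two, Fin.sum_univ_two, t00, t10, t01, t11]
    rw [← add_div]
    rw [show 1/2 * ((α + β) / Real.sqrt 2) + 1/2 * ((α + β) / Real.sqrt 2)
        = (α + β) / Real.sqrt 2 by ring]
    exact min_self _
  · rw [show 1 - 1/2 * (α - β)^2 = ((α + β) / Real.sqrt 2)^2 by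
      rw [div_pow, Real.sq_sqrt (by norm_num : (0:ℝ) ≤ 2)]
      linear_combination (-1 : ℝ) * hnorm]
    rw [Real.sqrt_sq (div_nonneg habv hs2.le)]
end

section
/- Let 1/√2 < α < 1, β = √(1−α²), N ≥ 2, and P_fail = (α²−β²)^{N−1}. For the distilled assemblage Σ^dist, the x = 1 contribution to the singlet-assemblage fraction equals Σ_{a∈{0,1}} F(σ^dist_{a|1}, σ^{Φ+}_{a|1}) = √(1 − ½P_fail(α−β)²). -/
open Matrix Finset
open scoped ComplexOrder

/-- The distilled assemblage `Σ^dist` obtained on average from the `N`-copy protocol,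
with `P_fail = (α²−β²)^{N−1}` and `P_success = 1 − P_fail`:
`σ^dist_{0|0} = (½P_success + α²P_fail)|0⟩⟨0|`,
`σ^dist_{1|0} = (½P_success + β²P_fail)|1⟩⟨1|`,
`σ^dist_{0|1} = ½(P_success|+⟩⟨+| + P_fail|α₊⟩⟨α₊|)`,
`σ^dist_{1|1} = ½(P_success|−⟩⟨−| + P_fail|α₋⟩⟨α₋|)`. -/
noncomputable def σdist (α β : ℝ) (N : ℕ) (a x : Fin 2) : Matrix (Fin 2) (Fin 2) ℂ :=
  let Pfail : ℝ := (α ^ 2 - β ^ 2) ^ (N - 1)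
  let Psuccess : ℝ := 1 - Pfail
  if x = 0 then
    if a = 0 then ((1 / 2 * Psuccess + α ^ 2 * Pfail : ℝ) : ℂ) • P00
    else ((1 / 2 * Psuccess + β ^ 2 * Pfail : ℝ) : ℂ) • P11
  else
    if a = 0 then
      (1 / 2 : ℂ) • (((Psuccess : ℝ) : ℂ) • vecMulVec ketp (star ketp) +
        ((Pfail : ℝ) : ℂ) • vecMulVec (ketαp α β) (star (ketαp α β)))
    else
      (1 / 2 : ℂ) • (((Psuccess : ℝ) : ℂ) • vecMulVec ketm (star ketm) +
        ((Pfail : ℝ) : ℂ) • vecMulVec (ketαm α β) (star (ketαm α β)))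

section Aux

variable {d : ℕ}

open scoped MatrixOrder

lemma matSqrt_eq_cfc {A : Matrix (Fin d) (Fin d) ℂ} (hA : A.PosSemidef) :
    matSqrt A = CFC.sqrt A := by
  rw [matSqrt, dif_pos hA, CFC.sqrt_eq_cfc, cfc_nnreal_eq_real _ A, hA.1.cfc_eq]
  simp only [IsHermitian.cfc, Unitary.conjStarAlgAut_apply]
  congr 3
  funext x
  show Complex.ofReal (√(hA.1.eigenvalues x)) =
    RCLike.ofReal (↑(NNReal.sqrt (hA.1.eigenvalues x).toNNReal))
  rw [Real.coe_sqrt, Real.coe_toNNReal', max_eq_left (hA.eigenvalues_nonneg x)]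
  rfl

lemma aux_mul_vecMulVec {m n o : Type*} [Fintype n] (M : Matrix m n ℂ) (v : n → ℂ) (w : o → ℂ) :
    M * vecMulVec v w = vecMulVec (M *ᵥ v) w := by
  ext i j
  simp [Matrix.mul_apply, vecMulVec_apply, Matrix.mulVec, dotProduct, Finset.sum_mul,
    mul_assoc]

lemma aux_vecMulVec_mul {m n o : Type*} [Fintype n] (v : m → ℂ) (w : n → ℂ) (M : Matrix n o ℂ) :
    vecMulVec v w * M = vecMulVec v (w ᵥ* M) := by
  ext i j
  simp [Matrix.mul_apply, vecMulVec_apply, Matrix.vecMul, dotProduct, Finset.mul_sum,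
    mul_assoc]

lemma aux_vecMulVec_mul_vecMulVec {m n o : Type*} [Fintype n] (v : m → ℂ) (w x : n → ℂ)
    (y : o → ℂ) :
    vecMulVec v w * vecMulVec x y = (w ⬝ᵥ x) • vecMulVec v y := by
  ext i j
  simp [Matrix.mul_apply, vecMulVec_apply, dotProduct, Finset.mul_sum, Finset.sum_mul]
  ring_nf
  congr 1
  ext k
  ring

lemma aux_trace_vecMulVec (v w : Fin d → ℂ) : (vecMulVec v w).trace = v ⬝ᵥ w := by
  simp [Matrix.trace, Matrix.diag, vecMulVec_apply, dotProduct]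

lemma aux_vecMulVec_mulVec {n o : Type*} [Fintype o] (v : n → ℂ) (w : o → ℂ) (x : o → ℂ) :
    vecMulVec v w *ᵥ x = (w ⬝ᵥ x) • v := by
  ext i
  simp [Matrix.mulVec, vecMulVec_apply, dotProduct, Finset.mul_sum, mul_assoc,
    mul_comm, mul_left_comm]

lemma aux_posSemidef_vecMulVec (v : Fin d → ℂ) : (vecMulVec v (star v)).PosSemidef := by
  exact Matrix.posSemidef_vecMulVec_self_star v

lemma aux_posSemidef_smul {A : Matrix (Fin d) (Fin d) ℂ} (hA : A.PosSemidef) {c : ℝ}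
    (hc : 0 ≤ c) : ((c : ℂ) • A).PosSemidef := by
  exact hA.smul (a := (c : ℂ)) (by exact_mod_cast hc)

lemma matSqrt_eq {A S : Matrix (Fin d) (Fin d) ℂ} (hS : S.PosSemidef) (h : S * S = A) :
    matSqrt A = S := by
  have hA : A.PosSemidef := by
    rw [← h]
    nth_rewrite 1 [← hS.1]
    exact posSemidef_conjTranspose_mul_self S
  rw [matSqrt_eq_cfc hA]
  exact (CFC.sqrt_eq_iff A S hA.nonneg hS.nonneg).mpr h

lemma mFid_rankOne (A : Matrix (Fin d) (Fin d) ℂ) (hA : A.PosSemidef)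
    (v : Fin d → ℂ) (c : ℝ) (hc : 0 ≤ c) :
    mFid A ((c : ℂ) • vecMulVec v (star v)) =
      Real.sqrt (c * (star v ⬝ᵥ A *ᵥ v).re) := by
  have hSA : matSqrt A = CFC.sqrt A := matSqrt_eq_cfc hA
  set S := matSqrt A with hSdef
  have hSpsd : S.PosSemidef := by rw [hSA]; exact (CFC.sqrt_nonneg A).posSemidef
  have hSS : S * S = A := by rw [hSA]; exact CFC.sqrt_mul_sqrt_self A hA.nonneg
  have hSH : Sᴴ = S := hSpsd.1
  set w : Fin d → ℂ := S *ᵥ v with hw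
  have hsw : star v ᵥ* S = star w := by
    rw [hw, star_mulVec, hSH]
  have hT : S * ((c : ℂ) • vecMulVec v (star v)) * S
      = (c : ℂ) • vecMulVec w (star w) := by
    rw [Matrix.mul_smul, Matrix.smul_mul, aux_mul_vecMulVec, aux_vecMulVec_mul, hsw]
  have hkey : star v ⬝ᵥ A *ᵥ v = star w ⬝ᵥ w := by
    rw [← hSS, ← mulVec_mulVec, dotProduct_mulVec, hsw]
  set n2 : ℝ := ∑ i, Complex.normSq (w i) with hn2def
  have hwre : star w ⬝ᵥ w = (n2 : ℂ) := by
    rw [hn2def]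
    push_cast
    simp [dotProduct, Complex.star_def, Complex.conj_mul', Complex.normSq_eq_norm_sq]
  have hn2 : 0 ≤ n2 := Finset.sum_nonneg fun i _ => Complex.normSq_nonneg _
  have hre : (star v ⬝ᵥ A *ᵥ v).re = n2 := by rw [hkey, hwre, Complex.ofReal_re]
  rw [mFid, ← hSdef, hT, hre]
  by_cases hw0 : w = 0
  · have : ((c : ℂ) • vecMulVec w (star w)) = 0 := by
      rw [hw0]; ext i j; simp [vecMulVec_apply]
    rw [this]
    have h0 : matSqrt (0 : Matrix (Fin d) (Fin d) ℂ) = 0 :=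
      matSqrt_eq (Matrix.PosSemidef.zero) (by simp)
    rw [h0]
    have : n2 = 0 := by
      rw [hn2def]
      apply Finset.sum_eq_zero
      intro i _
      rw [hw0]; simp
    simp [this, Matrix.trace]
  · rcases eq_or_lt_of_le hc with hc0 | hcpos
    · rw [← hc0]
      have : ((0 : ℝ) : ℂ) • vecMulVec w (star w) = 0 := by simp
      rw [this]
      have h0 : matSqrt (0 : Matrix (Fin d) (Fin d) ℂ) = 0 :=
        matSqrt_eq (Matrix.PosSemidef.zero) (by simp)
      rw [h0]
      simp [Matrix.trace]
    · have hn2pos : 0 < n2 := by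
        rcases lt_or_eq_of_le hn2 with h | h
        · exact h
        · exfalso; apply hw0
          ext i
          have := (Finset.sum_eq_zero_iff_of_nonneg
            (fun i _ => Complex.normSq_nonneg (w i))).mp h.symm i (Finset.mem_univ i)
          simpa [Complex.normSq_eq_zero] using this
      set t : ℝ := Real.sqrt (c / n2) with htdef
      have ht : 0 ≤ t := Real.sqrt_nonneg _
      have httn2 : t * t * n2 = c := by
        rw [htdef, Real.mul_self_sqrt (div_nonneg hc hn2pos.le)]
        field_simp
      have hsq : ((t : ℂ) • vecMulVec w (star w)) * ((t : ℂ) • vecMulVec w (star w))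
          = (c : ℂ) • vecMulVec w (star w) := by
        rw [Matrix.smul_mul, Matrix.mul_smul, aux_vecMulVec_mul_vecMulVec, hwre,
          smul_smul, smul_smul]
        congr 1
        rw [← httn2]
        push_cast
        ring
      have hpsd : ((t : ℂ) • vecMulVec w (star w)).PosSemidef :=
        aux_posSemidef_smul (aux_posSemidef_vecMulVec w) ht
      rw [matSqrt_eq hpsd hsq, trace_smul, aux_trace_vecMulVec]
      have hws : w ⬝ᵥ star w = (n2 : ℂ) := by
        rw [hn2def]
        push_cast
        simp [dotProduct, Complex.star_def, Complex.mul_conj', Complex.normSq_eq_norm_sq]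
      rw [hws]
      have : ((t : ℂ) • (n2 : ℂ)).re = t * n2 := by
        simp [smul_eq_mul]
      rw [this]
      have hcn2 : c * n2 = (c / n2) * n2 ^ 2 := by field_simp
      rw [hcn2, Real.sqrt_mul (div_nonneg hc hn2pos.le), Real.sqrt_sq hn2pos.le, htdef]

end Aux

/-- The `x = 1` contribution to the singlet-assemblage fraction of the
distilled assemblage equals `√(1 − ½P_fail(α−β)²)`. -/
theorem distilled_fraction_x1 (α β : ℝ) (hα2 : 1 / Real.sqrt 2 < α) (hα : α < 1)
    (hβ : β = Real.sqrt (1 - α ^ 2)) (N : ℕ) (hN : 2 ≤ N) :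
    ∑ a, mFid (σdist α β N a 1) (σΦ a 1) =
      Real.sqrt (1 - 1 / 2 * (α ^ 2 - β ^ 2) ^ (N - 1) * (α - β) ^ 2) := by
  classical
  have hs2 : (0:ℝ) < Real.sqrt 2 := by positivity
  have hα0 : 0 < α := lt_trans (by positivity) hα2
  have hαsq : 1/2 < α ^ 2 := by
    have h := mul_self_lt_mul_self (by positivity : (0:ℝ) ≤ 1 / Real.sqrt 2) hα2
    calc (1:ℝ)/2 = 1 / Real.sqrt 2 * (1 / Real.sqrt 2) := by
          rw [div_mul_div_comm, one_mul, Real.mul_self_sqrt (by norm_num)]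
      _ < α * α := h
      _ = α ^ 2 := (sq α).symm
  have hβ2 : β ^ 2 = 1 - α ^ 2 := by
    rw [hβ, Real.sq_sqrt (by nlinarith)]
  set Pf : ℝ := (α ^ 2 - β ^ 2) ^ (N - 1) with hPfdef
  have hPf0 : 0 ≤ Pf := pow_nonneg (by nlinarith) _
  have hA0 : σdist α β N 0 1 = ((1/2 : ℝ) : ℂ) •
      (((1 - Pf : ℝ) : ℂ) • vecMulVec ketp (star ketp) +
       ((Pf : ℝ) : ℂ) • vecMulVec (ketαp α β) (star (ketαp α β))) := by
    simp only [σdist]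
    norm_num
    simp only [hPfdef, Complex.ofReal_sub, Complex.ofReal_pow, Complex.ofReal_one]
    simp only [← Complex.coe_smul, Complex.ofReal_pow, Complex.ofReal_sub]
  have hA1 : σdist α β N 1 1 = ((1/2 : ℝ) : ℂ) •
      (((1 - Pf : ℝ) : ℂ) • vecMulVec ketm (star ketm) +
       ((Pf : ℝ) : ℂ) • vecMulVec (ketαm α β) (star (ketαm α β))) := by
    simp only [σdist]
    norm_num
    simp only [hPfdef, Complex.ofReal_sub, Complex.ofReal_pow, Complex.ofReal_one]
    simp only [← Complex.coe_smul, Complex.ofReal_pow, Complex.ofReal_sub]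
  have hPs0 : 0 ≤ 1 - Pf := by
    have h1 : α ^ 2 - β ^ 2 ≤ 1 := by nlinarith
    have := pow_le_one₀ (by nlinarith : (0:ℝ) ≤ α ^ 2 - β ^ 2) h1 (n := N - 1)
    linarith
  have hpsd0 : (σdist α β N 0 1).PosSemidef := by
    rw [hA0]
    exact aux_posSemidef_smul
      ((aux_posSemidef_smul (aux_posSemidef_vecMulVec _) hPs0).add
        (aux_posSemidef_smul (aux_posSemidef_vecMulVec _) hPf0)) (by norm_num)
  have hpsd1 : (σdist α β N 1 1).PosSemidef := by
    rw [hA1]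
    exact aux_posSemidef_smul
      ((aux_posSemidef_smul (aux_posSemidef_vecMulVec _) hPs0).add
        (aux_posSemidef_smul (aux_posSemidef_vecMulVec _) hPf0)) (by norm_num)
  have hσΦ0 : σΦ 0 1 = (((1:ℝ)/2 : ℝ) : ℂ) • vecMulVec ketp (star ketp) := by
    simp only [σΦ]
    norm_num
  have hσΦ1 : σΦ 1 1 = (((1:ℝ)/2 : ℝ) : ℂ) • vecMulVec ketm (star ketm) := by
    simp only [σΦ]
    norm_num
  have h2c : ((Real.sqrt 2 : ℝ) : ℂ) * ((Real.sqrt 2 : ℝ) : ℂ) = 2 := by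
    rw [← Complex.ofReal_mul, Real.mul_self_sqrt (by norm_num)]
    norm_num
  have hp2 : ((Real.sqrt 2 : ℝ) : ℂ) ^ 2 = 2 := by rw [sq]; exact h2c
  have hp4 : ((Real.sqrt 2 : ℝ) : ℂ) ^ 4 = 4 := by
    rw [show ((Real.sqrt 2 : ℝ) : ℂ) ^ 4 = (((Real.sqrt 2 : ℝ) : ℂ) ^ 2) ^ 2 by ring, hp2]
    norm_num
  have hs2c : ((Real.sqrt 2 : ℝ) : ℂ) ≠ 0 := by
    simp [Complex.ofReal_ne_zero, hs2.ne']
  have hdot0 : star ketp ⬝ᵥ (σdist α β N 0 1) *ᵥ ketp =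
      ((1/2 * ((1 - Pf) + Pf * (α + β)^2/2) : ℝ) : ℂ) := by
    rw [hA0]
    simp [Matrix.mulVec, dotProduct, Fin.sum_univ_two, vecMulVec_apply, -cons_vecMulVec, ketp, ketαp,
      Complex.star_def, Complex.conj_ofReal]
    push_cast
    field_simp
    ring_nf
    simp only [hp2, hp4]
    ring
  have hdot1 : star ketm ⬝ᵥ (σdist α β N 1 1) *ᵥ ketm =
      ((1/2 * ((1 - Pf) + Pf * (α + β)^2/2) : ℝ) : ℂ) := by
    rw [hA1]
    simp [Matrix.mulVec, dotProduct, Fin.sum_univ_two, vecMulVec_apply, -cons_vecMulVec, ketm, ketαm,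
      Complex.star_def, Complex.conj_ofReal]
    push_cast
    field_simp
    ring_nf
    simp only [hp2, hp4]
    ring
  rw [Fin.sum_univ_two, hσΦ0, hσΦ1,
    mFid_rankOne _ hpsd0 _ _ (by norm_num),
    mFid_rankOne _ hpsd1 _ _ (by norm_num),
    hdot0, hdot1, Complex.ofReal_re]
  set q : ℝ := 1/2 * (1/2 * ((1 - Pf) + Pf * (α + β)^2/2)) with hq
  have hsum : Real.sqrt q + Real.sqrt q = Real.sqrt (4 * q) := by
    have h1 : Real.sqrt (4 * q) = Real.sqrt 4 * Real.sqrt q := Real.sqrt_mul (by norm_num) q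
    have h2 : Real.sqrt 4 = 2 := by
      rw [show (4:ℝ) = 2 ^ 2 by norm_num, Real.sqrt_sq (by norm_num : (0:ℝ) ≤ 2)]
    rw [h1, h2]
    ring
  rw [hsum]
  congr 1
  rw [hq]
  linear_combination Pf * hβ2
end
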